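/- Greedy achieves a (1 − 1/e) approximation for cardinality-constrained monotone submodular maximization: if F is a monotone submodular set function on a finite ground set with F(∅) = 0, and G_r is the set built by r steps of greedy selection (each step adding an element with maximal marginal gain), then F(G_r) ≥ (1 − (1 − 1/r)^r) · max_{|S| ≤ r} F(S) ≥ (1 − 1/e) · max_{|S| ≤ r} F(S). -/

import Mathlib

open Finset

lemma tele_submod {n : ℕ} (F : Finset (Fin n) → ℝ)
    (hsub : ∀ S T : Finset (Fin n), ∀ x : Fin n, S ⊆ T →
      F (insert x T) - F T ≤ F (insert x S) - F S)
    (A T : Finset (Fin n)) :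
    F (T ∪ A) - F T ≤ ∑ x ∈ A, (F (insert x T) - F T) := by
  induction A using Finset.induction_on with
  | empty => simp
  | insert a A ha ih =>
    rw [Finset.union_insert, Finset.sum_insert ha]
    have h := hsub T (T ∪ A) a Finset.subset_union_left
    linarith

/-- Greedy achieves a `1 - (1 - 1/r)^r ≥ 1 - 1/e` approximation for
cardinality-constrained monotone submodular maximization. -/
theorem greedy_submodular_approximation
    (n : ℕ) (F : Finset (Fin n) → ℝ)
    (hmono : ∀ S T : Finset (Fin n), S ⊆ T → F S ≤ F T)
    (hsub : ∀ S T : Finset (Fin n), ∀ x : Fin n, S ⊆ T →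
      F (insert x T) - F T ≤ F (insert x S) - F S)
    (hempty : F ∅ = 0)
    (r : ℕ) (hr : 1 ≤ r)
    (G : ℕ → Finset (Fin n)) (hG0 : G 0 = ∅)
    (hgreedy : ∀ t < r, ∃ x : Fin n, G (t + 1) = insert x (G t) ∧
      ∀ y : Fin n, F (insert y (G t)) ≤ F (insert x (G t))) :
    ∀ S : Finset (Fin n), S.card ≤ r →
      (1 - (1 - 1 / (r : ℝ)) ^ r) * F S ≤ F (G r) ∧
      (1 - 1 / Real.exp 1) * F S ≤ F (G r) := by
  intro S hS
  have hFS : (0:ℝ) ≤ F S := by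
    have := hmono ∅ S (Finset.empty_subset S); linarith [hempty ▸ this]
  have hrpos : (0:ℝ) < (r:ℝ) := by exact_mod_cast Nat.lt_of_lt_of_le Nat.zero_lt_one hr
  have hq : (0:ℝ) ≤ 1 - 1/(r:ℝ) := by
    have : (1:ℝ) ≤ (r:ℝ) := by exact_mod_cast hr
    have h1 : 1/(r:ℝ) ≤ 1 := by
      rw [div_le_one hrpos]; exact this
    linarith
  set q : ℝ := 1 - 1/(r:ℝ) with hqdef
  -- one greedy step
  have step : ∀ t < r, F S - F (G (t+1)) ≤ q * (F S - F (G t)) := by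
    intro t ht
    obtain ⟨x, hGt, hmax⟩ := hgreedy t ht
    have hΔ0 : F (G t) ≤ F (G (t+1)) := by
      rw [hGt]; exact hmono _ _ (Finset.subset_insert _ _)
    have key : F S - F (G t) ≤ (r:ℝ) * (F (G (t+1)) - F (G t)) := by
      have c1 : F S ≤ F (G t ∪ S) := hmono S _ Finset.subset_union_right
      have c2 := tele_submod F hsub S (G t)
      have c3 : ∑ y ∈ S, (F (insert y (G t)) - F (G t))
          ≤ ∑ _y ∈ S, (F (G (t+1)) - F (G t)) := by
        apply Finset.sum_le_sum
        intro y _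
        have := hmax y
        rw [hGt]
        linarith
      have c4 : ∑ _y ∈ S, (F (G (t+1)) - F (G t))
          = (S.card : ℝ) * (F (G (t+1)) - F (G t)) := by
        rw [Finset.sum_const, nsmul_eq_mul]
      have c5 : (S.card:ℝ) * (F (G (t+1)) - F (G t))
          ≤ (r:ℝ) * (F (G (t+1)) - F (G t)) := by
        apply mul_le_mul_of_nonneg_right
        · exact_mod_cast hS
        · linarith
      calc F S - F (G t) ≤ F (G t ∪ S) - F (G t) := by linarith
        _ ≤ ∑ y ∈ S, (F (insert y (G t)) - F (G t)) := c2
        _ ≤ (r:ℝ) * (F (G (t+1)) - F (G t)) := by rw [← c4] at c5; linarith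
    have hdiv : (F S - F (G t))/(r:ℝ) ≤ F (G (t+1)) - F (G t) := by
      rw [div_le_iff₀ hrpos]; linarith
    have hring : q * (F S - F (G t)) = (F S - F (G t)) - (F S - F (G t))/(r:ℝ) := by
      rw [hqdef]; ring
    rw [hring]
    linarith
  -- induction
  have main : ∀ t, t ≤ r → F S - F (G t) ≤ q ^ t * F S := by
    intro t
    induction t with
    | zero => intro _; simp [hG0, hempty]
    | succ t ih =>
      intro ht
      have ht' : t < r := ht
      have h1 := step t ht'
      have h2 := ih (Nat.le_of_lt ht')
      have h3 : q * (F S - F (G t)) ≤ q * (q ^ t * F S) :=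
        mul_le_mul_of_nonneg_left h2 hq
      have : q * (q ^ t * F S) = q ^ (t+1) * F S := by ring
      linarith
  have hmr := main r le_rfl
  have goal1 : (1 - q ^ r) * F S ≤ F (G r) := by
    have : (1 - q ^ r) * F S = F S - q ^ r * F S := by ring
    linarith
  refine ⟨goal1, ?_⟩
  have hqe : q ≤ Real.exp (-(1/(r:ℝ))) := by
    have := Real.add_one_le_exp (-(1/(r:ℝ)))
    rw [hqdef]; linarith
  have hpow : q ^ r ≤ Real.exp (-(1/(r:ℝ))) ^ r := pow_le_pow_left₀ hq hqe r
  have hexp : Real.exp (-(1/(r:ℝ))) ^ r = 1 / Real.exp 1 := by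
    rw [← Real.exp_nat_mul]
    have hrne : (r:ℝ) ≠ 0 := ne_of_gt hrpos
    have : (r:ℝ) * -(1/(r:ℝ)) = -1 := by field_simp
    rw [this, Real.exp_neg, one_div]
  rw [hexp] at hpow
  have : (1 - 1 / Real.exp 1) * F S ≤ (1 - q ^ r) * F S := by
    apply mul_le_mul_of_nonneg_right _ hFS
    linarith
  linarith
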